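/- Let {P_{j,m}(ε,t,A)} be a secular-coefficient family with renormalized amplitudes 𝒜_j(ε,t,A) = P_{j,m_j}(ε,t,A). Then the relation between bare and renormalized amplitudes can be inverted explicitly: for every 1 ≤ j ≤ n, P_{j,m_j}(ε, −t, 𝒜(ε, t, A)) = A_j, as an identity in ℂ[t,A][[ε]] (in particular the left-hand side is independent of t). -/

import Mathlib

noncomputable section

open Polynomial

/-- Finite `R`-linear combinations of Fourier modes `e^{i m t}` (`m : ℤ`):
the mode-`m` coefficient of `x` is `x m : R`. -/
abbrev ModeRing (R : Type) [CommRing R] : Type := AddMonoidAlgebra R ℤ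

/-- Formal power series in `ε` whose coefficients are finite Fourier sums with
coefficients in `R`. -/
abbrev EpsSeries (R : Type) [CommRing R] : Type := PowerSeries (ModeRing R)

/-- The mode `e^{i t}`, as a unit of `EpsSeries R` (inverse `e^{-i t}`). -/
def zUnit (R : Type) [CommRing R] : (EpsSeries R)ˣ where
  val := PowerSeries.C (AddMonoidAlgebra.single 1 1)
  inv := PowerSeries.C (AddMonoidAlgebra.single (-1) 1)
  val_inv := by
    rw [← map_mul, AddMonoidAlgebra.single_mul_single]
    norm_num [AddMonoidAlgebra.one_def]
  inv_val := by
    rw [← map_mul, AddMonoidAlgebra.single_mul_single]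
    norm_num [AddMonoidAlgebra.one_def]

/-- Evaluation of a Laurent polynomial in `z` (an element of `ℂ[z,z⁻¹] = AddMonoidAlgebra ℂ ℤ`)
at `z = e^{i t}`, landing in `EpsSeries R`. -/
def zEval (R : Type) [CommRing R] [Algebra ℂ R] : AddMonoidAlgebra ℂ ℤ →+* EpsSeries R :=
  AddMonoidAlgebra.liftNCRingHom
    ((PowerSeries.C (R := _)).comp (AddMonoidAlgebra.singleZeroRingHom.comp (algebraMap ℂ R)))
    ((Units.coeHom _).comp (zpowersHom _ (zUnit R)))
    (fun _ _ => Commute.all _ _)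

/-- Evaluation of `V ∈ ℂ[ε, z, z⁻¹, y₁, …, yₙ]` (encoded as a polynomial in the `y`-variables
with coefficients in `ℂ[z,z⁻¹][ε]`) at `z = e^{i t}`, `ε = ε` (the power series variable)
and given formal series values of the `y`-variables. -/
def VEval {n : ℕ} (R : Type) [CommRing R] [Algebra ℂ R]
    (V : MvPolynomial (Fin n) (Polynomial (AddMonoidAlgebra ℂ ℤ)))
    (y : Fin n → EpsSeries R) : EpsSeries R :=
  MvPolynomial.eval₂ (Polynomial.eval₂RingHom (zEval R) PowerSeries.X) y V

/-- The polynomial ring `ℂ[t, A₁, …, Aₙ]`: the variable `none` is `t`, `some i` is `Aᵢ`. -/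
abbrev AmpRing (n : ℕ) : Type := MvPolynomial (Option (Fin n)) ℂ

/-- The secular coefficient `P_{j,m}(ε,t,A) ∈ ℂ[t,A][[ε]]` of a family
`Q j = Σ_k ε^k Σ_m P_{j,m}^{(k)} e^{imt}`. -/
def Pc {n : ℕ} (Q : Fin n → EpsSeries (AmpRing n)) (j : Fin n) (m : ℤ) :
    PowerSeries (AmpRing n) :=
  PowerSeries.mk fun k => (PowerSeries.coeff (R := ModeRing (AmpRing n)) k (Q j)).coeff m

/-- A secular-coefficient family for the system `dy_j/dt = i m_j y_j + ε V_j(ε,e^{±it},y)`: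
(a) at each `ε`-order only finitely many modes are nonzero (built into `ModeRing`);
(b) the `ε⁰`-coefficient of `P_{j,m}` is `A_j δ_{m,m_j}`;
(c) for `k ≥ 1` the `ε^k`-coefficient of the resonant `P_{j,m_j}` vanishes at `t = 0`;
(d) the differential equation holds order by order in `ε` and mode by mode in `e^{imt}`:
`∂_t P_{j,m} + i(m-m_j) P_{j,m} = [ε V_j(ε, e^{±it}, Σ_l P_{·,l} e^{ilt})]_{e^{imt}}`. -/
structure IsSecularFamily {n : ℕ} (mvec : Fin n → ℤ)
    (V : Fin n → MvPolynomial (Fin n) (Polynomial (AddMonoidAlgebra ℂ ℤ)))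
    (Q : Fin n → EpsSeries (AmpRing n)) : Prop where
  coeff_zero : ∀ j, PowerSeries.coeff (R := ModeRing (AmpRing n)) 0 (Q j)
      = AddMonoidAlgebra.single (mvec j) (MvPolynomial.X (some j))
  resonant_vanish : ∀ (j : Fin n) (k : ℕ), 1 ≤ k →
    MvPolynomial.aeval
      (fun v : Option (Fin n) => Option.elim v (0 : AmpRing n) (fun i => MvPolynomial.X (some i)))
      ((PowerSeries.coeff (R := ModeRing (AmpRing n)) k (Q j)).coeff (mvec j)) = 0
  ode : ∀ (j : Fin n) (m : ℤ),
    (PowerSeries.mk fun k =>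
        MvPolynomial.pderiv none ((PowerSeries.coeff (R := ModeRing (AmpRing n)) k (Q j)).coeff m))
      + PowerSeries.C (MvPolynomial.C (Complex.I * ((m : ℂ) - (mvec j : ℂ)))) * Pc Q j m
      = PowerSeries.mk fun k =>
          (PowerSeries.coeff (R := ModeRing (AmpRing n)) k
            (PowerSeries.X * VEval (AmpRing n) (V j) Q)).coeff m

/-- The polynomial ring `ℂ[t, s, A₁, …, Aₙ]`: `none` is `t`, `some none` is `s`,
`some (some i)` is `Aᵢ`. -/
abbrev AmpRing2 (n : ℕ) : Type := MvPolynomial (Option (Option (Fin n))) ℂ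

/-- The inclusion `ℂ[t,A] → ℂ[t,s,A]`. -/
def embedTA {n : ℕ} : AmpRing n →+* AmpRing2 n :=
  (MvPolynomial.rename (Option.map (some : Fin n → Option (Fin n)))).toRingHom

/-- The map `ℂ[t,A] → ℂ[t,s,A]` renaming `t` to `s`. -/
def renameTS {n : ℕ} : AmpRing n →+* AmpRing2 n :=
  (MvPolynomial.rename
    (fun v : Option (Fin n) => Option.elim v (some none) (fun i => some (some i)))).toRingHom

/-- Substitution of power series (with nontrivial `ε⁰`-part) for the coefficient variables of a
power series: `(substSeries φ p) = Σ_k ε^k · φ(coeff_k p)`; at each `ε`-order this is a finite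
sum. -/
def substSeries {R R' : Type} [CommRing R] [CommRing R'] (φ : R →+* PowerSeries R')
    (p : PowerSeries R) : PowerSeries R' :=
  PowerSeries.mk fun K => ∑ k ∈ Finset.range (K + 1),
    PowerSeries.coeff (R := R') (K - k) (φ (PowerSeries.coeff (R := R) k p))

/-- The renormalized amplitude `𝒜_i(ε,s,A) = P_{i,m_i}(ε,s,A)`, as an element of
`ℂ[t,s,A][[ε]]` (the `t`-variable of `P` renamed to `s`). -/
def renAmpS {n : ℕ} (mvec : Fin n → ℤ) (Q : Fin n → EpsSeries (AmpRing n)) (i : Fin n) :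
    PowerSeries (AmpRing2 n) :=
  PowerSeries.map renameTS (Pc Q i (mvec i))

/-- The substitution `t ↦ t - s`, `A_i ↦ 𝒜_i(ε,s,A)`, as a ring map
`ℂ[t,A] → ℂ[t,s,A][[ε]]`. -/
def substTA {n : ℕ} (mvec : Fin n → ℤ) (Q : Fin n → EpsSeries (AmpRing n)) :
    AmpRing n →+* PowerSeries (AmpRing2 n) :=
  MvPolynomial.eval₂Hom ((PowerSeries.C (R := AmpRing2 n)).comp MvPolynomial.C)
    (fun v : Option (Fin n) => Option.elim v
      (PowerSeries.C (MvPolynomial.X none - MvPolynomial.X (some none)))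
      (fun i => renAmpS mvec Q i))

/-- The substitution `t ↦ -t`, `A_i ↦ 𝒜_i(ε,t,A)`, as a ring map `ℂ[t,A] → ℂ[t,A][[ε]]`. -/
def substInv {n : ℕ} (mvec : Fin n → ℤ) (Q : Fin n → EpsSeries (AmpRing n)) :
    AmpRing n →+* PowerSeries (AmpRing n) :=
  MvPolynomial.eval₂Hom ((PowerSeries.C (R := AmpRing n)).comp MvPolynomial.C)
    (fun v : Option (Fin n) => Option.elim v
      (PowerSeries.C (-MvPolynomial.X none))
      (fun i => Pc Q i (mvec i)))

section SubstSeriesLemmas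

open PowerSeries

variable {R R' R'' : Type} [CommRing R] [CommRing R'] [CommRing R'']

lemma coeff_substSeries (φ : R →+* PowerSeries R') (p : PowerSeries R) (K : ℕ) :
    coeff (R := R') K (substSeries φ p)
      = ∑ k ∈ Finset.range (K + 1), coeff (R := R') (K - k) (φ (coeff (R := R) k p)) := by
  simp [substSeries]

lemma substSeries_add (φ : R →+* PowerSeries R') (p q : PowerSeries R) :
    substSeries φ (p + q) = substSeries φ p + substSeries φ q := by
  ext K
  simp [coeff_substSeries, Finset.sum_add_distrib]

lemma coeff_eval₂_poly (φ : R →+* PowerSeries R') (f : Polynomial R) (K : ℕ) :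
    coeff (R := R') K (Polynomial.eval₂ φ PowerSeries.X f)
      = ∑ k ∈ Finset.range (K + 1), coeff (R := R') (K - k) (φ (f.coeff k)) := by
  rcases le_or_gt (f.natDegree + 1) (K + 1) with h | h
  · rw [Polynomial.eval₂_eq_sum_range' φ (by omega : f.natDegree < K + 1)]
    rw [map_sum]
    refine Finset.sum_congr rfl fun k hk => ?_
    rw [PowerSeries.coeff_mul_X_pow']
    simp only [Finset.mem_range] at hk
    rw [if_pos (by omega)]
  · rw [Polynomial.eval₂_eq_sum_range' φ (by omega : f.natDegree < f.natDegree + 1)]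
    rw [map_sum]
    rw [← Finset.sum_subset (Finset.range_subset_range.2 (by omega : K + 1 ≤ f.natDegree + 1))
      (fun k _ hk => ?_)]
    · refine Finset.sum_congr rfl fun k hk => ?_
      rw [PowerSeries.coeff_mul_X_pow']
      simp only [Finset.mem_range] at hk
      rw [if_pos (by omega)]
    · simp only [Finset.mem_range] at hk
      rw [PowerSeries.coeff_mul_X_pow', if_neg (by omega)]

lemma coeff_substSeries_eq_eval₂ (φ : R →+* PowerSeries R') (p : PowerSeries R) (K : ℕ)
    (f : Polynomial R) (hf : ∀ k ≤ K, f.coeff k = coeff (R := R) k p) :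
    coeff (R := R') K (substSeries φ p) = coeff (R := R') K (Polynomial.eval₂ φ PowerSeries.X f) := by
  rw [coeff_substSeries, coeff_eval₂_poly]
  refine Finset.sum_congr rfl fun k hk => ?_
  simp only [Finset.mem_range] at hk
  rw [hf k (by omega)]

lemma substSeries_mul (φ : R →+* PowerSeries R') (p q : PowerSeries R) :
    substSeries φ (p * q) = substSeries φ p * substSeries φ q := by
  ext K
  rw [coeff_substSeries_eq_eval₂ φ (p * q) K (trunc (K+1) p * trunc (K+1) q) ?_]
  · rw [Polynomial.eval₂_mul, PowerSeries.coeff_mul, PowerSeries.coeff_mul]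
    refine Finset.sum_congr rfl fun x hx => ?_
    rw [Finset.HasAntidiagonal.mem_antidiagonal] at hx
    rw [coeff_substSeries_eq_eval₂ φ p x.1 (trunc (K+1) p)
        (fun k hk => by rw [PowerSeries.coeff_trunc, if_pos (by omega)]),
      coeff_substSeries_eq_eval₂ φ q x.2 (trunc (K+1) q)
        (fun k hk => by rw [PowerSeries.coeff_trunc, if_pos (by omega)])]
  · intro k hk
    rw [Polynomial.coeff_mul, PowerSeries.coeff_mul]
    refine Finset.sum_congr rfl fun x hx => ?_
    rw [Finset.HasAntidiagonal.mem_antidiagonal] at hx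
    rw [PowerSeries.coeff_trunc, if_pos (by omega), PowerSeries.coeff_trunc, if_pos (by omega)]

lemma substSeries_one (φ : R →+* PowerSeries R') : substSeries φ 1 = 1 := by
  ext K
  rw [coeff_substSeries_eq_eval₂ φ 1 K 1 (fun k _ => by
    simp [Polynomial.coeff_one, PowerSeries.coeff_one])]
  simp

/-- `substSeries φ` as a ring homomorphism. -/
def substSeriesHom (φ : R →+* PowerSeries R') : PowerSeries R →+* PowerSeries R' :=
  { toFun := substSeries φ
    map_one' := substSeries_one φ
    map_mul' := substSeries_mul φ
    map_zero' := by ext K; simp [coeff_substSeries]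
    map_add' := substSeries_add φ }

@[simp] lemma substSeriesHom_apply (φ : R →+* PowerSeries R') (p : PowerSeries R) :
    substSeriesHom φ p = substSeries φ p := rfl

lemma substSeries_C (φ : R →+* PowerSeries R') (r : R) :
    substSeries φ (PowerSeries.C (R := R) r) = φ r := by
  ext K
  rw [coeff_substSeries]
  rw [Finset.sum_eq_single 0]
  · simp
  · intro k hk hk0
    simp only [Finset.mem_range] at hk
    rw [PowerSeries.coeff_C, if_neg hk0]
    simp
  · simp

lemma substSeries_X (φ : R →+* PowerSeries R') :
    substSeries φ (PowerSeries.X) = PowerSeries.X := by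
  ext K
  rw [coeff_substSeries]
  rcases Nat.eq_zero_or_pos K with rfl | hK
  · simp [PowerSeries.coeff_X]
  · rw [Finset.sum_eq_single 1]
    · rw [PowerSeries.coeff_X, if_pos rfl, map_one, PowerSeries.coeff_one,
        PowerSeries.coeff_X]
      exact if_congr (by omega) rfl rfl
    · intro k hk hk1
      rw [PowerSeries.coeff_X, if_neg hk1]
      simp
    · intro h
      simp only [Finset.mem_range] at h
      omega

lemma substSeries_map (σ : R' →+* R'') (φ : R →+* PowerSeries R') (p : PowerSeries R) :
    PowerSeries.map σ (substSeries φ p)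
      = substSeries ((PowerSeries.map σ).comp φ) p := by
  ext K
  simp [coeff_substSeries, map_sum]

lemma substSeries_CE (E : R →+* R') (p : PowerSeries R) :
    substSeries ((PowerSeries.C (R := R')).comp E) p = PowerSeries.map E p := by
  ext K
  rw [coeff_substSeries]
  rw [Finset.sum_eq_single K]
  · simp
  · intro k hk hkK
    simp only [Finset.mem_range] at hk
    rw [RingHom.comp_apply, PowerSeries.coeff_C, if_neg (by omega)]
  · simp

lemma substSeries_C_mul (φ : R →+* PowerSeries R') (r : R) (x : R')
    (hr : φ r = PowerSeries.C (R := R') x) (p : PowerSeries R) :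
    substSeries φ (PowerSeries.C (R := R) r * p) = PowerSeries.C (R := R') x * substSeries φ p := by
  rw [← hr, ← substSeries_C φ r, ← substSeries_mul]

end SubstSeriesLemmas
section ModeLift

open PowerSeries

variable {R R' : Type} [CommRing R] [CommRing R']

lemma zUnit_zpow_val (R : Type) [CommRing R] (m : ℤ) :
    ((zUnit R ^ m : (EpsSeries R)ˣ) : EpsSeries R)
      = PowerSeries.C (R := ModeRing R) (AddMonoidAlgebra.single m 1) := by
  induction m using Int.induction_on with
  | zero => rw [zpow_zero, Units.val_one, ← AddMonoidAlgebra.one_def, map_one]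
  | succ k ih =>
      rw [zpow_add_one, Units.val_mul, ih]
      show _ * (zUnit R).val = _
      rw [zUnit, ← map_mul, AddMonoidAlgebra.single_mul_single, mul_one]
  | pred k ih =>
      rw [zpow_sub_one, Units.val_mul, ih]
      show _ * (zUnit R).inv = _
      rw [zUnit, ← map_mul, AddMonoidAlgebra.single_mul_single, mul_one]
      norm_num [sub_eq_add_neg]

/-- Lift of a substitution `φ : R →+* R'[[ε]]` to the level of Fourier-mode rings:
modes are preserved, coefficients are substituted. -/
def modeLift (φ : R →+* PowerSeries R') : ModeRing R →+* EpsSeries R' :=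
  AddMonoidAlgebra.liftNCRingHom
    ((PowerSeries.map AddMonoidAlgebra.singleZeroRingHom).comp φ)
    ((Units.coeHom _).comp (zpowersHom _ (zUnit R')))
    (fun _ _ => Commute.all _ _)

lemma modeLift_single (φ : R →+* PowerSeries R') (m : ℤ) (r : R) :
    modeLift φ (AddMonoidAlgebra.single m r)
      = PowerSeries.map AddMonoidAlgebra.singleZeroRingHom (φ r)
        * PowerSeries.C (R := ModeRing R') (AddMonoidAlgebra.single m 1) := by
  rw [modeLift, AddMonoidAlgebra.liftNCRingHom]
  show AddMonoidAlgebra.liftNC _ _ _ = _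
  rw [AddMonoidAlgebra.liftNC_single]
  congr 1
  exact zUnit_zpow_val R' m

lemma coeff_modeLift (φ : R →+* PowerSeries R') (w : ModeRing R) (c : ℕ) (m : ℤ) :
    (PowerSeries.coeff (R := ModeRing R') c (modeLift φ w)).coeff m
      = PowerSeries.coeff (R := R') c (φ (w.coeff m)) := by
  induction w using AddMonoidAlgebra.induction_linear with
  | zero => simp
  | add f g hf hg =>
      rw [AddMonoidAlgebra.coeff_add, Finsupp.add_apply, map_add, map_add, map_add, map_add, ← hf, ← hg]
      rw [AddMonoidAlgebra.coeff_add]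
      exact Finsupp.add_apply _ _ _
  | single a b =>
      rw [modeLift_single, PowerSeries.coeff_mul_C, PowerSeries.coeff_map]
      show (AddMonoidAlgebra.single (0:ℤ) ((PowerSeries.coeff (R := R') c) (φ b))
        * AddMonoidAlgebra.single a (1:R')).coeff m = _
      rw [AddMonoidAlgebra.single_mul_single, mul_one, zero_add]
      rw [AddMonoidAlgebra.coeff_single, AddMonoidAlgebra.coeff_single, Finsupp.single_apply, Finsupp.single_apply]
      split_ifs with h
      · rfl
      · rw [map_zero, map_zero]

/-- Extract the mode-`m` component of an `EpsSeries`, as a power series of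
scalar coefficients. -/
def modeCoeff (q : EpsSeries R) (m : ℤ) : PowerSeries R :=
  PowerSeries.mk fun k => (PowerSeries.coeff (R := ModeRing R) k q).coeff m

lemma coeff_modeCoeff (q : EpsSeries R) (m : ℤ) (k : ℕ) :
    PowerSeries.coeff (R := R) k (modeCoeff q m) = (PowerSeries.coeff (R := ModeRing R) k q).coeff m := by
  simp [modeCoeff]

lemma modeCoeff_substSeries_modeLift (φ : R →+* PowerSeries R') (q : EpsSeries R) (m : ℤ) :
    modeCoeff (substSeries (modeLift φ) q) m = substSeries φ (modeCoeff q m) := by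
  ext K
  rw [coeff_modeCoeff, coeff_substSeries, coeff_substSeries]
  rw [AddMonoidAlgebra.coeff_sum, Finsupp.finset_sum_apply]
  refine Finset.sum_congr rfl fun k _ => ?_
  rw [coeff_modeLift, coeff_modeCoeff]

lemma modeCoeff_Pc {n : ℕ} (Q : Fin n → EpsSeries (AmpRing n)) (j : Fin n) (m : ℤ) :
    Pc Q j m = modeCoeff (Q j) m := rfl

end ModeLift
section ZEvalCompat

open PowerSeries

variable {R R' : Type} [CommRing R] [CommRing R'] [Algebra ℂ R] [Algebra ℂ R']

lemma zEval_single (m : ℤ) (c : ℂ) :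
    zEval R (AddMonoidAlgebra.single m c)
      = PowerSeries.C (R := ModeRing R) (AddMonoidAlgebra.single m (algebraMap ℂ R c)) := by
  rw [zEval, AddMonoidAlgebra.liftNCRingHom]
  show AddMonoidAlgebra.liftNC _ _ _ = _
  rw [AddMonoidAlgebra.liftNC_single]
  show PowerSeries.C _ * ((zUnit R ^ m : (EpsSeries R)ˣ) : EpsSeries R) = _
  rw [zUnit_zpow_val, ← map_mul]
  show PowerSeries.C (AddMonoidAlgebra.single (0:ℤ) ((algebraMap ℂ R) c)
    * AddMonoidAlgebra.single m 1) = _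
  rw [AddMonoidAlgebra.single_mul_single, mul_one, zero_add]

lemma substSeries_modeLift_zEval (φ : R →+* PowerSeries R')
    (hφ : ∀ c : ℂ, φ (algebraMap ℂ R c) = PowerSeries.C (R := R') (algebraMap ℂ R' c))
    (x : AddMonoidAlgebra ℂ ℤ) :
    substSeries (modeLift φ) (zEval R x) = zEval R' x := by
  induction x using AddMonoidAlgebra.induction_linear with
  | zero =>
      rw [map_zero, map_zero]
      exact (substSeriesHom (modeLift φ)).map_zero
  | add f g hf hg =>
      rw [map_add, map_add, substSeries_add, hf, hg]
  | single a b =>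
      rw [zEval_single, substSeries_C, modeLift_single, hφ, PowerSeries.map_C,
        ← map_mul]
      show PowerSeries.C (AddMonoidAlgebra.single (0:ℤ) ((algebraMap ℂ R') b)
        * AddMonoidAlgebra.single a 1) = _
      rw [AddMonoidAlgebra.single_mul_single, mul_one, zero_add, zEval_single]

lemma substSeries_modeLift_VEval {n : ℕ} (φ : R →+* PowerSeries R')
    (hφ : ∀ c : ℂ, φ (algebraMap ℂ R c) = PowerSeries.C (R := R') (algebraMap ℂ R' c))
    (V : MvPolynomial (Fin n) (Polynomial (AddMonoidAlgebra ℂ ℤ)))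
    (y : Fin n → EpsSeries R) :
    substSeries (modeLift φ) (VEval R V y)
      = VEval R' V (fun i => substSeries (modeLift φ) (y i)) := by
  have hF : (substSeriesHom (modeLift φ)).comp
        (Polynomial.eval₂RingHom (zEval R) PowerSeries.X)
      = Polynomial.eval₂RingHom (zEval R') PowerSeries.X := by
    apply Polynomial.ringHom_ext
    · intro a
      rw [RingHom.comp_apply, Polynomial.coe_eval₂RingHom, Polynomial.eval₂_C,
        Polynomial.coe_eval₂RingHom, Polynomial.eval₂_C]
      exact substSeries_modeLift_zEval φ hφ a
    · rw [RingHom.comp_apply, Polynomial.coe_eval₂RingHom, Polynomial.eval₂_X,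
        Polynomial.coe_eval₂RingHom, Polynomial.eval₂_X]
      exact substSeries_X _
  show substSeriesHom (modeLift φ) (VEval R V y) = _
  rw [VEval, MvPolynomial.eval₂_comp_left (substSeriesHom (modeLift φ)), hF, VEval]
  rfl

end ZEvalCompat

section PDeriv

open PowerSeries

variable {Rb σ τ : Type} [CommRing Rb]

/-- Coefficientwise partial derivative on power series over a polynomial ring. -/
def pdCoeff (i : σ) (q : PowerSeries (MvPolynomial σ Rb)) : PowerSeries (MvPolynomial σ Rb) :=
  PowerSeries.mk fun k => MvPolynomial.pderiv i (PowerSeries.coeff k q)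

lemma coeff_pdCoeff (i : σ) (q : PowerSeries (MvPolynomial σ Rb)) (k : ℕ) :
    PowerSeries.coeff k (pdCoeff i q)
      = MvPolynomial.pderiv i (PowerSeries.coeff k q) := by
  simp [pdCoeff]

lemma pdCoeff_add (i : σ) (p q : PowerSeries (MvPolynomial σ Rb)) :
    pdCoeff i (p + q) = pdCoeff i p + pdCoeff i q := by
  ext K
  rw [coeff_pdCoeff, map_add, map_add, map_add, coeff_pdCoeff, coeff_pdCoeff]

lemma pdCoeff_C (i : σ) (x : MvPolynomial σ Rb) :
    pdCoeff i (PowerSeries.C x) = PowerSeries.C (MvPolynomial.pderiv i x) := by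
  ext K
  rw [coeff_pdCoeff, PowerSeries.coeff_C, PowerSeries.coeff_C]
  split_ifs <;> simp

lemma pdCoeff_mul (i : σ) (p q : PowerSeries (MvPolynomial σ Rb)) :
    pdCoeff i (p * q) = pdCoeff i p * q + p * pdCoeff i q := by
  ext K
  simp only [coeff_pdCoeff, PowerSeries.coeff_mul, map_add, map_sum,
    MvPolynomial.pderiv_mul, Finset.sum_add_distrib]

lemma pderiv_rename_of_forall_ne {f : σ → τ} {j : τ} (hj : ∀ i, f i ≠ j)
    (p : MvPolynomial σ Rb) :
    MvPolynomial.pderiv j (MvPolynomial.rename f p) = 0 := by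
  classical
  refine MvPolynomial.pderiv_eq_zero_of_notMem_vars fun h => ?_
  obtain ⟨i, -, hi⟩ := MvPolynomial.mem_vars_rename f p h
  exact hj i hi

end PDeriv
section Transport

open PowerSeries

variable {n : ℕ}

lemma substTA_C (mvec : Fin n → ℤ) (Q : Fin n → EpsSeries (AmpRing n)) (c : ℂ) :
    substTA mvec Q (MvPolynomial.C c) = PowerSeries.C (R := AmpRing2 n) (MvPolynomial.C c) := by
  rw [substTA, MvPolynomial.eval₂Hom_C, RingHom.comp_apply]

lemma substTA_X_none (mvec : Fin n → ℤ) (Q : Fin n → EpsSeries (AmpRing n)) :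
    substTA mvec Q (MvPolynomial.X none)
      = PowerSeries.C (R := AmpRing2 n) (MvPolynomial.X none - MvPolynomial.X (some none)) := by
  rw [substTA, MvPolynomial.eval₂Hom_X']
  rfl

lemma substTA_X_some (mvec : Fin n → ℤ) (Q : Fin n → EpsSeries (AmpRing n)) (i : Fin n) :
    substTA mvec Q (MvPolynomial.X (some i)) = renAmpS mvec Q i := by
  rw [substTA, MvPolynomial.eval₂Hom_X']
  rfl

lemma pderiv_none_renameTS (p : AmpRing n) :
    MvPolynomial.pderiv (none : Option (Option (Fin n))) (renameTS p) = 0 := by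
  refine pderiv_rename_of_forall_ne (fun v => ?_) p
  cases v <;> simp

lemma pderiv_none_embedTA (p : AmpRing n) :
    MvPolynomial.pderiv (none : Option (Option (Fin n))) (embedTA p)
      = embedTA (MvPolynomial.pderiv none p) := by
  exact MvPolynomial.pderiv_rename (Option.map_injective (Option.some_injective _)) none p

lemma pdCoeff_substTA (mvec : Fin n → ℤ) (Q : Fin n → EpsSeries (AmpRing n)) (p : AmpRing n) :
    pdCoeff (none : Option (Option (Fin n))) (substTA mvec Q p)
      = substTA mvec Q (MvPolynomial.pderiv none p) := by
  induction p using MvPolynomial.induction_on with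
  | C c =>
      rw [substTA_C, pdCoeff_C, MvPolynomial.pderiv_C, MvPolynomial.pderiv_C, map_zero, map_zero]
  | add p q hp hq =>
      rw [map_add, pdCoeff_add, hp, hq, map_add, map_add]
  | mul_X p v hp =>
      have hX : pdCoeff (none : Option (Option (Fin n))) (substTA mvec Q (MvPolynomial.X v))
          = substTA mvec Q (MvPolynomial.pderiv none (MvPolynomial.X v)) := by
        cases v with
        | none =>
            rw [substTA_X_none, pdCoeff_C, MvPolynomial.pderiv_X_self, map_sub,
              MvPolynomial.pderiv_X_self, MvPolynomial.pderiv_X_of_ne (by simp), sub_zero,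
              map_one, map_one]
        | some i =>
            rw [substTA_X_some, MvPolynomial.pderiv_X_of_ne (by simp), map_zero, renAmpS]
            ext K
            rw [coeff_pdCoeff, PowerSeries.coeff_map, pderiv_none_renameTS, map_zero]
      rw [map_mul, pdCoeff_mul, hp, hX, MvPolynomial.pderiv_mul, map_add, map_mul, map_mul]

lemma pdCoeff_CembedTA (p : AmpRing n) :
    pdCoeff (none : Option (Option (Fin n))) (PowerSeries.C (R := AmpRing2 n) (embedTA p))
      = PowerSeries.C (R := AmpRing2 n) (embedTA (MvPolynomial.pderiv none p)) := by
  rw [pdCoeff_C, pderiv_none_embedTA]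

lemma substSeries_pdCoeff {n : ℕ} (φ : AmpRing n →+* PowerSeries (AmpRing2 n))
    (hd : ∀ p : AmpRing n, pdCoeff (none : Option (Option (Fin n))) (φ p)
        = φ (MvPolynomial.pderiv none p))
    (q : PowerSeries (AmpRing n)) :
    substSeries φ (pdCoeff none q) = pdCoeff none (substSeries φ q) := by
  refine PowerSeries.ext fun K => ?_
  rw [coeff_pdCoeff, coeff_substSeries, coeff_substSeries]
  have hsum : ∀ (s : Finset ℕ) (g : ℕ → AmpRing2 n),
      MvPolynomial.pderiv (none : Option (Option (Fin n))) (∑ k ∈ s, g k)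
        = ∑ k ∈ s, MvPolynomial.pderiv (none : Option (Option (Fin n))) (g k) := by
    intro s g
    induction s using Finset.induction_on with
    | empty => rw [Finset.sum_empty, Finset.sum_empty, map_zero]
    | insert _ _ hx ih => rw [Finset.sum_insert hx, Finset.sum_insert hx, map_add, ih]
  rw [hsum]
  refine Finset.sum_congr rfl fun k _ => ?_
  rw [coeff_pdCoeff, ← hd, coeff_pdCoeff]

lemma transport_ode (mvec : Fin n → ℤ)
    (V : Fin n → MvPolynomial (Fin n) (Polynomial (AddMonoidAlgebra ℂ ℤ)))
    (Q : Fin n → EpsSeries (AmpRing n)) (hQ : IsSecularFamily mvec V Q)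
    (φ : AmpRing n →+* PowerSeries (AmpRing2 n))
    (hc : ∀ c : ℂ, φ (MvPolynomial.C c) = PowerSeries.C (R := AmpRing2 n) (MvPolynomial.C c))
    (hd : ∀ p : AmpRing n, pdCoeff (none : Option (Option (Fin n))) (φ p)
        = φ (MvPolynomial.pderiv none p))
    (j : Fin n) (m : ℤ) :
    pdCoeff (none : Option (Option (Fin n))) (substSeries φ (modeCoeff (Q j) m))
      + PowerSeries.C (R := AmpRing2 n) (MvPolynomial.C (Complex.I * ((m : ℂ) - (mvec j : ℂ))))
        * substSeries φ (modeCoeff (Q j) m)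
      = modeCoeff (PowerSeries.X * VEval (AmpRing2 n) (V j)
          (fun i => substSeries (modeLift φ) (Q i))) m := by
  have hφz : ∀ c : ℂ, φ (algebraMap ℂ (AmpRing n) c)
      = PowerSeries.C (R := AmpRing2 n) (algebraMap ℂ (AmpRing2 n) c) := by
    intro c
    rw [MvPolynomial.algebraMap_eq, MvPolynomial.algebraMap_eq]
    exact hc c
  have ode := hQ.ode j m
  have h1 : (PowerSeries.mk fun k =>
        MvPolynomial.pderiv none ((PowerSeries.coeff (R := ModeRing (AmpRing n)) k (Q j)).coeff m))
      = pdCoeff none (modeCoeff (Q j) m) := by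
    ext K
    rw [PowerSeries.coeff_mk, coeff_pdCoeff, coeff_modeCoeff]
  rw [h1] at ode
  have h2 : Pc Q j m = modeCoeff (Q j) m := rfl
  rw [h2] at ode
  have h3 : (PowerSeries.mk fun k =>
        (PowerSeries.coeff (R := ModeRing (AmpRing n)) k
          (PowerSeries.X * VEval (AmpRing n) (V j) Q)).coeff m)
      = modeCoeff (PowerSeries.X * VEval (AmpRing n) (V j) Q) m := rfl
  rw [h3] at ode
  have h4 := congrArg (substSeries φ) ode
  rw [substSeries_add, substSeries_pdCoeff φ hd, substSeries_C_mul φ _ _ (hc _)] at h4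
  rw [← modeCoeff_substSeries_modeLift φ (PowerSeries.X * VEval (AmpRing n) (V j) Q) m,
    substSeries_mul, substSeries_X, substSeries_modeLift_VEval φ hφz] at h4
  rw [← modeCoeff_substSeries_modeLift φ (Q j) m] at h4 ⊢
  exact h4

end Transport
section ScalarODE

variable {σ : Type}

lemma optionEquivLeft_pderiv (d : MvPolynomial (Option σ) ℂ) :
    MvPolynomial.optionEquivLeft ℂ σ (MvPolynomial.pderiv none d)
      = Polynomial.derivative (MvPolynomial.optionEquivLeft ℂ σ d) := by
  induction d using MvPolynomial.induction_on with
  | C a =>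
      rw [MvPolynomial.pderiv_C, map_zero, MvPolynomial.optionEquivLeft_C,
        Polynomial.derivative_C]
  | add p q hp hq => rw [map_add, map_add, hp, hq, map_add, Polynomial.derivative_add]
  | mul_X p v hp =>
      have hX : MvPolynomial.optionEquivLeft ℂ σ (MvPolynomial.pderiv none (MvPolynomial.X v))
          = Polynomial.derivative (MvPolynomial.optionEquivLeft ℂ σ (MvPolynomial.X v)) := by
        cases v with
        | none =>
            rw [MvPolynomial.pderiv_X_self, map_one, MvPolynomial.optionEquivLeft_X_none,
              Polynomial.derivative_X]
        | some i =>
            rw [MvPolynomial.pderiv_X_of_ne (by simp), map_zero,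
              MvPolynomial.optionEquivLeft_X_some, Polynomial.derivative_C]
      rw [MvPolynomial.pderiv_mul, map_add, map_mul, map_mul, map_mul, hp, hX,
        Polynomial.derivative_mul]

lemma optionEquivLeft_rename_some (c : MvPolynomial σ ℂ) :
    MvPolynomial.optionEquivLeft ℂ σ (MvPolynomial.rename some c) = Polynomial.C c := by
  induction c using MvPolynomial.induction_on with
  | C a => rw [MvPolynomial.rename_C, MvPolynomial.optionEquivLeft_C]
  | add p q hp hq => rw [map_add, map_add, hp, hq, map_add]
  | mul_X p i hp =>
      rw [map_mul, MvPolynomial.rename_X, map_mul, MvPolynomial.optionEquivLeft_X_some, hp,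
        ← map_mul]

lemma ode_nonresonant {α : ℂ} (hα : α ≠ 0) (d : MvPolynomial (Option σ) ℂ)
    (h : MvPolynomial.pderiv none d + MvPolynomial.C α * d = 0) : d = 0 := by
  have he := congrArg (MvPolynomial.optionEquivLeft ℂ σ) h
  rw [map_add, map_mul, optionEquivLeft_pderiv, MvPolynomial.optionEquivLeft_C, map_zero] at he
  set q := MvPolynomial.optionEquivLeft ℂ σ d with hq
  by_contra hd
  have hq0 : q ≠ 0 := by
    intro h0
    exact hd ((MvPolynomial.optionEquivLeft ℂ σ).injective (by rw [map_zero, ← hq, h0]))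
  have hCα : (MvPolynomial.C α : MvPolynomial σ ℂ) ≠ 0 := fun hC =>
    hα (by simpa using congrArg (MvPolynomial.coeff 0) hC)
  rcases Nat.eq_zero_or_pos q.natDegree with h0 | hpos
  · have hqC : q = Polynomial.C (q.coeff 0) := Polynomial.eq_C_of_natDegree_eq_zero h0
    rw [hqC, Polynomial.derivative_C, zero_add, ← map_mul] at he
    have : MvPolynomial.C α * q.coeff 0 = 0 := by
      simpa using congrArg (fun u => Polynomial.coeff u 0) he
    rcases mul_eq_zero.1 this with h | h
    · exact hCα h
    · exact hq0 (by rw [hqC, h, map_zero])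
  · have h1 : Polynomial.derivative q = -(Polynomial.C (MvPolynomial.C α) * q) :=
      eq_neg_of_add_eq_zero_left he
    have h2 : (Polynomial.derivative q).natDegree < q.natDegree :=
      Polynomial.natDegree_derivative_lt (by omega)
    rw [h1, Polynomial.natDegree_neg, Polynomial.natDegree_C_mul hCα] at h2
    exact lt_irrefl _ h2

lemma ode_resonant (d : MvPolynomial (Option σ) ℂ)
    (h : MvPolynomial.pderiv none d = 0) :
    ∃ c : MvPolynomial σ ℂ, d = MvPolynomial.rename some c := by
  have he := congrArg (MvPolynomial.optionEquivLeft ℂ σ) h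
  rw [optionEquivLeft_pderiv, map_zero] at he
  refine ⟨(MvPolynomial.optionEquivLeft ℂ σ d).coeff 0,
    (MvPolynomial.optionEquivLeft ℂ σ).injective ?_⟩
  rw [optionEquivLeft_rename_some]
  exact Polynomial.eq_C_of_derivative_eq_zero he

end ScalarODE
section Flow

open PowerSeries

variable {n : ℕ}

lemma aeval_X_comp_rename {σ τ : Type} (g : σ → τ) (p : MvPolynomial σ ℂ) :
    MvPolynomial.aeval (fun v => (MvPolynomial.X (g v) : MvPolynomial τ ℂ)) p
      = MvPolynomial.rename g p := by
  have h : (MvPolynomial.aeval (fun v => (MvPolynomial.X (g v) : MvPolynomial τ ℂ)) :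
        MvPolynomial σ ℂ →ₐ[ℂ] MvPolynomial τ ℂ) = MvPolynomial.rename g :=
    MvPolynomial.algHom_ext (fun v => by rw [MvPolynomial.aeval_X, MvPolynomial.rename_X])
  exact DFunLike.congr_fun h p

lemma X_pow_dvd_VEval_sub {R : Type} [CommRing R] [Algebra ℂ R]
    (V : MvPolynomial (Fin n) (Polynomial (AddMonoidAlgebra ℂ ℤ))) (N : ℕ)
    (y y' : Fin n → EpsSeries R)
    (h : ∀ i, (PowerSeries.X : EpsSeries R) ^ N ∣ (y i - y' i)) :
    (PowerSeries.X : EpsSeries R) ^ N ∣ (VEval R V y - VEval R V y') := by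
  rw [VEval, VEval]
  induction V using MvPolynomial.induction_on with
  | C a =>
      rw [MvPolynomial.eval₂_C, MvPolynomial.eval₂_C, sub_self]
      exact dvd_zero _
  | add p q hp hq =>
      have heq : MvPolynomial.eval₂ (Polynomial.eval₂RingHom (zEval R) PowerSeries.X) y (p + q)
            - MvPolynomial.eval₂ (Polynomial.eval₂RingHom (zEval R) PowerSeries.X) y' (p + q)
          = (MvPolynomial.eval₂ (Polynomial.eval₂RingHom (zEval R) PowerSeries.X) y p
              - MvPolynomial.eval₂ (Polynomial.eval₂RingHom (zEval R) PowerSeries.X) y' p)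
            + (MvPolynomial.eval₂ (Polynomial.eval₂RingHom (zEval R) PowerSeries.X) y q
              - MvPolynomial.eval₂ (Polynomial.eval₂RingHom (zEval R) PowerSeries.X) y' q) := by
        rw [MvPolynomial.eval₂_add, MvPolynomial.eval₂_add]
        ring
      rw [heq]
      exact dvd_add hp hq
  | mul_X p i hp =>
      have heq : MvPolynomial.eval₂ (Polynomial.eval₂RingHom (zEval R) PowerSeries.X) y
            (p * MvPolynomial.X i)
            - MvPolynomial.eval₂ (Polynomial.eval₂RingHom (zEval R) PowerSeries.X) y'
            (p * MvPolynomial.X i)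
          = (MvPolynomial.eval₂ (Polynomial.eval₂RingHom (zEval R) PowerSeries.X) y p
              - MvPolynomial.eval₂ (Polynomial.eval₂RingHom (zEval R) PowerSeries.X) y' p) * y i
            + MvPolynomial.eval₂ (Polynomial.eval₂RingHom (zEval R) PowerSeries.X) y' p
              * (y i - y' i) := by
        rw [MvPolynomial.eval₂_mul, MvPolynomial.eval₂_mul, MvPolynomial.eval₂_X,
          MvPolynomial.eval₂_X]
        ring
      rw [heq]
      exact dvd_add (hp.mul_right _) ((h i).mul_left _)

variable (mvec : Fin n → ℤ)
    (V : Fin n → MvPolynomial (Fin n) (Polynomial (AddMonoidAlgebra ℂ ℤ)))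
    (Q : Fin n → EpsSeries (AmpRing n))

/-- The bundled `ℂ[t,A] → ℂ[t,s,A][[ε]]`, `t,A ↦ t,A` (constant series). -/
def CEhom (n : ℕ) : AmpRing n →+* PowerSeries (AmpRing2 n) :=
  (PowerSeries.C (R := AmpRing2 n)).comp embedTA

lemma embedTA_C (c : ℂ) : (embedTA : AmpRing n →+* AmpRing2 n) (MvPolynomial.C c)
    = MvPolynomial.C c := by
  rw [embedTA]
  exact MvPolynomial.rename_C _ c

lemma CEhom_C (c : ℂ) : CEhom n (MvPolynomial.C c)
    = PowerSeries.C (R := AmpRing2 n) (MvPolynomial.C c) := by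
  rw [CEhom, RingHom.comp_apply, embedTA_C]

lemma CEhom_pd (p : AmpRing n) :
    pdCoeff (none : Option (Option (Fin n))) (CEhom n p)
      = CEhom n (MvPolynomial.pderiv none p) := by
  rw [CEhom, RingHom.comp_apply, RingHom.comp_apply]
  exact pdCoeff_CembedTA p

/-- The substitution `t ↦ 0`, `A ↦ A`, as in `resonant_vanish`. -/
def ev0hom (n : ℕ) : AmpRing n →+* AmpRing n :=
  (MvPolynomial.aeval
    (fun v : Option (Fin n) => Option.elim v (0 : AmpRing n) (fun i => MvPolynomial.X (some i)))).toRingHom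

/-- Substitution `t ↦ t` (irrelevant), `A_i ↦ 𝒜_i(ε,t,A)`. -/
def Shat (mvec : Fin n → ℤ) (Q : Fin n → EpsSeries (AmpRing n)) :
    AmpRing n →+* PowerSeries (AmpRing n) :=
  MvPolynomial.eval₂Hom ((PowerSeries.C (R := AmpRing n)).comp MvPolynomial.C)
    (fun v : Option (Fin n) => Option.elim v 0 (fun i => Pc Q i (mvec i)))

/-- The evaluation `t ↦ s`, `s ↦ s`, `A ↦ A` on `ℂ[t,s,A]`. -/
def rhoHom (n : ℕ) : AmpRing2 n →+* AmpRing2 n :=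
  (MvPolynomial.aeval
    (fun w : Option (Option (Fin n)) => Option.elim w (MvPolynomial.X (some none))
      (fun u => MvPolynomial.X (some u)))).toRingHom

lemma rhoHom_apply (p : AmpRing2 n) : rhoHom n p
    = MvPolynomial.aeval
      (fun w : Option (Option (Fin n)) => Option.elim w (MvPolynomial.X (some none))
        (fun u => MvPolynomial.X (some u))) p := rfl

lemma renameTS_apply (p : AmpRing n) : (renameTS : AmpRing n →+* AmpRing2 n) p
    = MvPolynomial.rename
        (fun v : Option (Fin n) => Option.elim v (some none) (fun i => some (some i))) p := rfl

lemma embedTA_apply (p : AmpRing n) : (embedTA : AmpRing n →+* AmpRing2 n) p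
    = MvPolynomial.rename (Option.map (some : Fin n → Option (Fin n))) p := rfl

lemma rho_renameTS (p : AmpRing n) : rhoHom n (renameTS p) = renameTS p := by
  rw [renameTS_apply, rhoHom_apply, MvPolynomial.aeval_rename]
  have hfun : ((fun w : Option (Option (Fin n)) => Option.elim w (MvPolynomial.X (some none))
        (fun u => MvPolynomial.X (some u)))
      ∘ (fun v : Option (Fin n) => Option.elim v (some none) (fun i => some (some i))))
      = fun v : Option (Fin n) => (MvPolynomial.X
          (Option.elim v (some none) (fun i => some (some i))) : AmpRing2 n) := by
    funext v
    cases v <;> rfl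
  rw [hfun]
  exact aeval_X_comp_rename _ p

lemma rho_embedTA (p : AmpRing n) : rhoHom n (embedTA p) = renameTS p := by
  rw [embedTA_apply, rhoHom_apply, MvPolynomial.aeval_rename, renameTS_apply]
  have hfun : ((fun w : Option (Option (Fin n)) => Option.elim w (MvPolynomial.X (some none))
        (fun u => MvPolynomial.X (some u)))
      ∘ (Option.map (some : Fin n → Option (Fin n))))
      = fun v : Option (Fin n) => (MvPolynomial.X
          (Option.elim v (some none) (fun i => some (some i))) : AmpRing2 n) := by
    funext v
    cases v <;> rfl
  rw [hfun]
  exact aeval_X_comp_rename _ p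

lemma rho_rename_some (c : MvPolynomial (Option (Fin n)) ℂ) :
    rhoHom n (MvPolynomial.rename some c) = MvPolynomial.rename some c := by
  rw [rhoHom_apply, MvPolynomial.aeval_rename]
  exact aeval_X_comp_rename _ c

lemma map_rho_substTA :
    (PowerSeries.map (rhoHom n)).comp (substTA mvec Q)
      = ((PowerSeries.map (renameTS : AmpRing n →+* AmpRing2 n)).comp (Shat mvec Q)).comp
          (ev0hom n) := by
  apply MvPolynomial.ringHom_ext
  · intro c
    rw [RingHom.comp_apply, substTA_C, PowerSeries.map_C, RingHom.comp_apply,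
      RingHom.comp_apply]
    have h0 : ev0hom n (MvPolynomial.C c) = MvPolynomial.C c := by
      show MvPolynomial.aeval _ (MvPolynomial.C c) = _
      rw [MvPolynomial.aeval_C, MvPolynomial.algebraMap_eq]
    rw [h0, Shat, MvPolynomial.eval₂Hom_C, RingHom.comp_apply, PowerSeries.map_C]
    have h1 : rhoHom n (MvPolynomial.C c) = MvPolynomial.C c := by
      show MvPolynomial.aeval _ (MvPolynomial.C c) = _
      rw [MvPolynomial.aeval_C, MvPolynomial.algebraMap_eq]
    rw [h1]
    congr 1
    rw [renameTS]
    exact (MvPolynomial.rename_C _ c).symm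
  · intro v
    cases v with
    | none =>
        rw [RingHom.comp_apply, substTA_X_none, PowerSeries.map_C]
        have h0 : ev0hom n (MvPolynomial.X none) = 0 := by
          show MvPolynomial.aeval _ (MvPolynomial.X none) = 0
          rw [MvPolynomial.aeval_X]
          rfl
        rw [RingHom.comp_apply, RingHom.comp_apply, h0, map_zero, map_zero]
        have h1 : rhoHom n (MvPolynomial.X none - MvPolynomial.X (some none)) = 0 := by
          show MvPolynomial.aeval _ _ = 0
          rw [map_sub, MvPolynomial.aeval_X, MvPolynomial.aeval_X]
          show MvPolynomial.X (some none) - MvPolynomial.X (some none) = 0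
          rw [sub_self]
        rw [h1, map_zero]
    | some i =>
        rw [RingHom.comp_apply, substTA_X_some, renAmpS]
        have h0 : ev0hom n (MvPolynomial.X (some i)) = MvPolynomial.X (some i) := by
          show MvPolynomial.aeval _ (MvPolynomial.X (some i)) = _
          rw [MvPolynomial.aeval_X]
          rfl
        rw [RingHom.comp_apply, RingHom.comp_apply, h0]
        have h1 : Shat mvec Q (MvPolynomial.X (some i)) = Pc Q i (mvec i) := by
          rw [Shat, MvPolynomial.eval₂Hom_X']
          rfl
        rw [h1]
        refine PowerSeries.ext fun K => ?_
        rw [PowerSeries.coeff_map, PowerSeries.coeff_map]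
        exact rho_renameTS _

end Flow
section Main

open PowerSeries

variable {n : ℕ} (mvec : Fin n → ℤ)
    (V : Fin n → MvPolynomial (Fin n) (Polynomial (AddMonoidAlgebra ℂ ℤ)))
    (Q : Fin n → EpsSeries (AmpRing n))

lemma ev0hom_coeff (hQ : IsSecularFamily mvec V Q) (j : Fin n) (k : ℕ) (hk : 1 ≤ k) :
    ev0hom n ((PowerSeries.coeff (R := ModeRing (AmpRing n)) k (Q j)).coeff (mvec j)) = 0 :=
  hQ.resonant_vanish j k hk

lemma coeff_zero_modeCoeff (hQ : IsSecularFamily mvec V Q) (j : Fin n) :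
    PowerSeries.coeff (R := AmpRing n) 0 (modeCoeff (Q j) (mvec j)) = MvPolynomial.X (some j) := by
  rw [coeff_modeCoeff, hQ.coeff_zero j]
  exact Finsupp.single_eq_same

lemma rho_coeff_substTA (hQ : IsSecularFamily mvec V Q) (j : Fin n) (K : ℕ) :
    rhoHom n (PowerSeries.coeff (R := AmpRing2 n) K
        (substSeries (substTA mvec Q) (modeCoeff (Q j) (mvec j))))
      = renameTS (PowerSeries.coeff (R := AmpRing n) K (modeCoeff (Q j) (mvec j))) := by
  rw [← PowerSeries.coeff_map, substSeries_map, map_rho_substTA mvec Q, coeff_substSeries]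
  rw [Finset.sum_eq_single 0]
  · rw [Nat.sub_zero, coeff_zero_modeCoeff mvec V Q hQ, RingHom.comp_apply, RingHom.comp_apply]
    have h0 : ev0hom n (MvPolynomial.X (some j)) = MvPolynomial.X (some j) := by
      show MvPolynomial.aeval _ (MvPolynomial.X (some j)) = _
      rw [MvPolynomial.aeval_X]
      rfl
    have h1 : Shat mvec Q (MvPolynomial.X (some j)) = Pc Q j (mvec j) := by
      rw [Shat, MvPolynomial.eval₂Hom_X']
      rfl
    rw [h0, h1, PowerSeries.coeff_map]
    rfl
  · intro k hkmem hk0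
    rw [RingHom.comp_apply, RingHom.comp_apply]
    have h0 : ev0hom n (PowerSeries.coeff (R := AmpRing n) k (modeCoeff (Q j) (mvec j))) = 0 := by
      rw [coeff_modeCoeff]
      exact ev0hom_coeff mvec V Q hQ j k (by omega)
    rw [h0, map_zero, map_zero, map_zero]
  · intro h
    exact absurd (Finset.mem_range.2 (by omega)) h

lemma flow (hQ : IsSecularFamily mvec V Q) (K : ℕ) :
    ∀ (j : Fin n) (m : ℤ),
      PowerSeries.coeff (R := AmpRing2 n) K (substSeries (substTA mvec Q) (modeCoeff (Q j) m))
        = PowerSeries.coeff (R := AmpRing2 n) K (substSeries (CEhom n) (modeCoeff (Q j) m)) := by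
  induction K using Nat.strong_induction_on with
  | _ K IH =>
  intro j m
  have odeS := transport_ode mvec V Q hQ (substTA mvec Q) (substTA_C mvec Q)
    (pdCoeff_substTA mvec Q) j m
  have odeE := transport_ode mvec V Q hQ (CEhom n) CEhom_C CEhom_pd j m
  have hRHS : PowerSeries.coeff (R := AmpRing2 n) K (modeCoeff
        (PowerSeries.X * VEval (AmpRing2 n) (V j)
          (fun i => substSeries (modeLift (substTA mvec Q)) (Q i))) m)
      = PowerSeries.coeff (R := AmpRing2 n) K (modeCoeff
        (PowerSeries.X * VEval (AmpRing2 n) (V j)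
          (fun i => substSeries (modeLift (CEhom n)) (Q i))) m) := by
    have hdvd : ∀ i, (PowerSeries.X : EpsSeries (AmpRing2 n)) ^ K ∣
        (substSeries (modeLift (substTA mvec Q)) (Q i)
          - substSeries (modeLift (CEhom n)) (Q i)) := by
      intro i
      rw [PowerSeries.X_pow_dvd_iff]
      intro c hc
      rw [map_sub, sub_eq_zero]
      refine AddMonoidAlgebra.ext (Finsupp.ext fun m' => ?_)
      have e1 : (PowerSeries.coeff (R := ModeRing (AmpRing2 n)) c
            (substSeries (modeLift (substTA mvec Q)) (Q i))).coeff m'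
          = PowerSeries.coeff (R := AmpRing2 n) c
              (substSeries (substTA mvec Q) (modeCoeff (Q i) m')) := by
        rw [← coeff_modeCoeff, modeCoeff_substSeries_modeLift]
      have e2 : (PowerSeries.coeff (R := ModeRing (AmpRing2 n)) c
            (substSeries (modeLift (CEhom n)) (Q i))).coeff m'
          = PowerSeries.coeff (R := AmpRing2 n) c
              (substSeries (CEhom n) (modeCoeff (Q i) m')) := by
        rw [← coeff_modeCoeff, modeCoeff_substSeries_modeLift]
      rw [e1, e2]
      exact IH c hc i m'
    have hv := X_pow_dvd_VEval_sub (V j) K _ _ hdvd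
    have hx : (PowerSeries.X : EpsSeries (AmpRing2 n)) ^ (K+1) ∣
        (PowerSeries.X * VEval (AmpRing2 n) (V j)
            (fun i => substSeries (modeLift (substTA mvec Q)) (Q i))
          - PowerSeries.X * VEval (AmpRing2 n) (V j)
            (fun i => substSeries (modeLift (CEhom n)) (Q i))) := by
      rw [← mul_sub, pow_succ']
      exact mul_dvd_mul_left _ hv
    have h0 := (PowerSeries.X_pow_dvd_iff.mp hx) K (by omega)
    rw [map_sub, sub_eq_zero] at h0
    rw [coeff_modeCoeff, coeff_modeCoeff, h0]
  have eS := congrArg (PowerSeries.coeff (R := AmpRing2 n) K) odeS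
  have eE := congrArg (PowerSeries.coeff (R := AmpRing2 n) K) odeE
  rw [map_add, coeff_pdCoeff, PowerSeries.coeff_C_mul] at eS eE
  set cu := PowerSeries.coeff (R := AmpRing2 n) K
    (substSeries (substTA mvec Q) (modeCoeff (Q j) m)) with hcu
  set cv := PowerSeries.coeff (R := AmpRing2 n) K
    (substSeries (CEhom n) (modeCoeff (Q j) m)) with hcv
  have hode : MvPolynomial.pderiv (none : Option (Option (Fin n))) (cu - cv)
      + MvPolynomial.C (Complex.I * ((m:ℂ) - (mvec j : ℂ))) * (cu - cv) = 0 := by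
    rw [map_sub, mul_sub]
    linear_combination eS - eE + hRHS
  rcases eq_or_ne m (mvec j) with rfl | hm
  · have hz : (Complex.I * (((mvec j):ℂ) - ((mvec j) : ℂ))) = 0 := by ring
    have hpd : MvPolynomial.pderiv (none : Option (Option (Fin n))) (cu - cv) = 0 := by
      rw [hz, map_zero, zero_mul, add_zero] at hode
      exact hode
    obtain ⟨c, hcrep⟩ := ode_resonant _ hpd
    have hrho : rhoHom n (cu - cv) = 0 := by
      rw [map_sub]
      have h1 : rhoHom n cu
          = renameTS (PowerSeries.coeff (R := AmpRing n) K (modeCoeff (Q j) (mvec j))) :=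
        rho_coeff_substTA mvec V Q hQ j K
      have h2 : rhoHom n cv
          = renameTS (PowerSeries.coeff (R := AmpRing n) K (modeCoeff (Q j) (mvec j))) := by
        rw [hcv, CEhom, substSeries_CE, PowerSeries.coeff_map, rho_embedTA]
      rw [h1, h2, sub_self]
    rw [hcrep, rho_rename_some] at hrho
    have : cu - cv = 0 := by rw [hcrep, hrho]
    exact sub_eq_zero.mp this
  · have hα : Complex.I * ((m:ℂ) - (mvec j:ℂ)) ≠ 0 :=
      mul_ne_zero Complex.I_ne_zero (sub_ne_zero.mpr (by exact_mod_cast hm))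
    exact sub_eq_zero.mp (ode_nonresonant hα _ hode)

/-- The evaluation `t ↦ 0`, `s ↦ t`, `A ↦ A` on `ℂ[t,s,A]`. -/
def sigmaHom (n : ℕ) : AmpRing2 n →+* AmpRing n :=
  (MvPolynomial.aeval
    (fun w : Option (Option (Fin n)) => Option.elim w (0 : AmpRing n)
      (fun u => MvPolynomial.X u))).toRingHom

lemma sigma_renameTS (p : AmpRing n) : sigmaHom n (renameTS p) = p := by
  show MvPolynomial.aeval _ (MvPolynomial.rename
    (fun v : Option (Fin n) => Option.elim v (some none) (fun i => some (some i))) p) = p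
  rw [MvPolynomial.aeval_rename]
  have hfun : ((fun w : Option (Option (Fin n)) => Option.elim w (0 : AmpRing n)
        (fun u => MvPolynomial.X u))
      ∘ (fun v : Option (Fin n) => Option.elim v (some none) (fun i => some (some i))))
      = fun v : Option (Fin n) => (MvPolynomial.X v : AmpRing n) := by
    funext v
    cases v <;> rfl
  rw [hfun]
  exact DFunLike.congr_fun MvPolynomial.aeval_X_left p

lemma sigma_embedTA (p : AmpRing n) : sigmaHom n (embedTA p) = ev0hom n p := by
  show MvPolynomial.aeval _ (MvPolynomial.rename (Option.map (some : Fin n → Option (Fin n))) p)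
    = MvPolynomial.aeval _ p
  rw [MvPolynomial.aeval_rename]
  have hfun : ((fun w : Option (Option (Fin n)) => Option.elim w (0 : AmpRing n)
        (fun u => MvPolynomial.X u)) ∘ (Option.map (some : Fin n → Option (Fin n))))
      = fun v : Option (Fin n) => Option.elim v (0 : AmpRing n)
          (fun i => MvPolynomial.X (some i)) := by
    funext v
    cases v <;> rfl
  rw [hfun]

lemma map_sigma_substTA :
    (PowerSeries.map (sigmaHom n)).comp (substTA mvec Q) = substInv mvec Q := by
  apply MvPolynomial.ringHom_ext
  · intro c
    rw [RingHom.comp_apply, substTA_C, PowerSeries.map_C]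
    have h1 : sigmaHom n (MvPolynomial.C c) = MvPolynomial.C c := by
      show MvPolynomial.aeval _ (MvPolynomial.C c) = _
      rw [MvPolynomial.aeval_C, MvPolynomial.algebraMap_eq]
    rw [h1, _root_.substInv, MvPolynomial.eval₂Hom_C, RingHom.comp_apply]
  · intro v
    cases v with
    | none =>
        rw [RingHom.comp_apply, substTA_X_none, PowerSeries.map_C]
        have h1 : sigmaHom n (MvPolynomial.X none - MvPolynomial.X (some none))
            = -MvPolynomial.X none := by
          show MvPolynomial.aeval _ _ = _
          rw [map_sub, MvPolynomial.aeval_X, MvPolynomial.aeval_X]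
          show (0 : AmpRing n) - MvPolynomial.X none = _
          rw [zero_sub]
        rw [h1, _root_.substInv, MvPolynomial.eval₂Hom_X']
        rfl
    | some i =>
        rw [RingHom.comp_apply, substTA_X_some, renAmpS, _root_.substInv, MvPolynomial.eval₂Hom_X']
        show PowerSeries.map (sigmaHom n) (PowerSeries.map renameTS (Pc Q i (mvec i)))
          = Pc Q i (mvec i)
        refine PowerSeries.ext fun K => ?_
        rw [PowerSeries.coeff_map, PowerSeries.coeff_map, sigma_renameTS]

end Main
/-- explicit inversion between bare and renormalized amplitudes,
semisimple case: `P_{j,m_j}(ε, -t, 𝒜(ε, t, A)) = A_j` in `ℂ[t,A][[ε]]`. -/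
theorem bare_amplitude_inversion {n : ℕ} (hn : 0 < n) (mvec : Fin n → ℤ)
    (V : Fin n → MvPolynomial (Fin n) (Polynomial (AddMonoidAlgebra ℂ ℤ)))
    (Q : Fin n → EpsSeries (AmpRing n))
    (hQ : IsSecularFamily mvec V Q) :
    ∀ j : Fin n,
      substSeries (substInv mvec Q) (Pc Q j (mvec j))
        = PowerSeries.C (R := AmpRing n) (MvPolynomial.X (some j)) := by
  intro j
  have hflow : substSeries (substTA mvec Q) (modeCoeff (Q j) (mvec j))
      = substSeries (CEhom n) (modeCoeff (Q j) (mvec j)) :=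
    PowerSeries.ext fun K => flow mvec V Q hQ K j (mvec j)
  have h1 : substSeries (substInv mvec Q) (Pc Q j (mvec j))
      = PowerSeries.map (sigmaHom n) (substSeries (substTA mvec Q) (Pc Q j (mvec j))) := by
    rw [substSeries_map, map_sigma_substTA]
  rw [h1, modeCoeff_Pc, hflow, CEhom, substSeries_CE]
  refine PowerSeries.ext fun k => ?_
  rw [PowerSeries.coeff_map, PowerSeries.coeff_map, sigma_embedTA, PowerSeries.coeff_C]
  rcases Nat.eq_zero_or_pos k with rfl | hk
  · rw [if_pos rfl, coeff_zero_modeCoeff mvec V Q hQ j]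
    show MvPolynomial.aeval _ (MvPolynomial.X (some j)) = _
    rw [MvPolynomial.aeval_X]
    rfl
  · rw [if_neg (by omega), coeff_modeCoeff]
    exact ev0hom_coeff mvec V Q hQ j k (by omega)

end
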